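/- Let K be a field and P, Q, R ∈ K[x] with no common factor. Two syzygies u₁ = (p₁,q₁,r₁) and u₂ = (p₂,q₂,r₂) between P, Q, R form a basis of the syzygy module if and only if the cross product (q₁r₂ − q₂r₁, p₂r₁ − p₁r₂, p₁q₂ − p₂q₁) is a nonzero K-scalar multiple of (P, Q, R). -/

import Mathlib

open Polynomial

/-- The module of syzygies between three univariate polynomials `P, Q, R`:
triples `(p, q, r)` with `p*P + q*Q + r*R = 0`, as a submodule of `(K[x])³`. -/
noncomputable def syzygyModule {K : Type*} [Field K] (P Q R : K[X]) :
    Submodule K[X] (Fin 3 → K[X]) :=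
  LinearMap.ker
    (P • (LinearMap.proj 0 : (Fin 3 → K[X]) →ₗ[K[X]] K[X])
      + Q • (LinearMap.proj 1 : (Fin 3 → K[X]) →ₗ[K[X]] K[X])
      + R • (LinearMap.proj 2 : (Fin 3 → K[X]) →ₗ[K[X]] K[X]))

lemma mem_syz {K : Type*} [Field K] {P Q R : K[X]} (v : Fin 3 → K[X]) :
    v ∈ syzygyModule P Q R ↔ P * v 0 + Q * v 1 + R * v 2 = 0 := by
  simp [syzygyModule, LinearMap.mem_ker, smul_eq_mul]

lemma bezout3 {K : Type*} [Field K] {P Q R : K[X]}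
    (hcop : ∀ d : K[X], d ∣ P → d ∣ Q → d ∣ R → IsUnit d) :
    ∃ a b e : K[X], a * P + b * Q + e * R = 1 := by
  classical
  set d := EuclideanDomain.gcd (EuclideanDomain.gcd P Q) R with hd
  have h1 : d ∣ P := (EuclideanDomain.gcd_dvd_left _ _).trans (EuclideanDomain.gcd_dvd_left _ _)
  have h2 : d ∣ Q := (EuclideanDomain.gcd_dvd_left _ _).trans (EuclideanDomain.gcd_dvd_right _ _)
  have h3 : d ∣ R := EuclideanDomain.gcd_dvd_right _ _
  have hu : IsUnit d := hcop d h1 h2 h3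
  obtain ⟨v, hv⟩ := hu.exists_left_inv
  have e1 : EuclideanDomain.gcd P Q = P * EuclideanDomain.gcdA P Q + Q * EuclideanDomain.gcdB P Q :=
    EuclideanDomain.gcd_eq_gcd_ab P Q
  have e2 : d = EuclideanDomain.gcd P Q * EuclideanDomain.gcdA (EuclideanDomain.gcd P Q) R
      + R * EuclideanDomain.gcdB (EuclideanDomain.gcd P Q) R :=
    EuclideanDomain.gcd_eq_gcd_ab _ R
  refine ⟨v * EuclideanDomain.gcdA (EuclideanDomain.gcd P Q) R * EuclideanDomain.gcdA P Q,
      v * EuclideanDomain.gcdA (EuclideanDomain.gcd P Q) R * EuclideanDomain.gcdB P Q,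
      v * EuclideanDomain.gcdB (EuclideanDomain.gcd P Q) R, ?_⟩
  calc _ = v * (EuclideanDomain.gcd P Q * EuclideanDomain.gcdA (EuclideanDomain.gcd P Q) R
      + R * EuclideanDomain.gcdB (EuclideanDomain.gcd P Q) R) := by rw [e1]; ring
  _ = 1 := by rw [← e2, hv]

lemma key_forward {A : Type*} [CommRing A]
    (P Q R p₁ q₁ r₁ p₂ q₂ r₂ a b e α₁ β₁ α₂ β₂ α₃ β₃ : A)
    (hbez : a*P + b*Q + e*R = 1)
    (e1p : α₁*p₁+β₁*p₂ = Q) (e1q : α₁*q₁+β₁*q₂ = -P) (e1r : α₁*r₁+β₁*r₂ = 0)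
    (e2p : α₂*p₁+β₂*p₂ = R) (e2q : α₂*q₁+β₂*q₂ = 0) (e2r : α₂*r₁+β₂*r₂ = -P)
    (e3p : α₃*p₁+β₃*p₂ = 0) (e3q : α₃*q₁+β₃*q₂ = R) (e3r : α₃*r₁+β₃*r₂ = -Q) :
    (a*(α₁*β₂-α₂*β₁) + b*(α₁*β₃-α₃*β₁) + e*(α₂*β₃-α₃*β₂)) * (q₁*r₂-q₂*r₁) = P
    ∧ (a*(α₁*β₂-α₂*β₁) + b*(α₁*β₃-α₃*β₁) + e*(α₂*β₃-α₃*β₂)) * (p₂*r₁-p₁*r₂) = Q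
    ∧ (a*(α₁*β₂-α₂*β₁) + b*(α₁*β₃-α₃*β₁) + e*(α₂*β₃-α₃*β₂)) * (p₁*q₂-p₂*q₁) = R := by
  refine ⟨?_, ?_, ?_⟩
  · linear_combination
      a*((α₂*r₁+β₂*r₂)*e1q + (-P)*e2r - (α₂*q₁+β₂*q₂)*e1r)
      + b*((α₃*r₁+β₃*r₂)*e1q + (-P)*e3r - (α₃*q₁+β₃*q₂)*e1r)
      + e*((α₃*r₁+β₃*r₂)*e2q - (α₃*q₁+β₃*q₂)*e2r + P*e3q)
      + P*hbez
  · linear_combination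
      -a*((α₂*r₁+β₂*r₂)*e1p + Q*e2r - (α₂*p₁+β₂*p₂)*e1r)
      - b*((α₃*r₁+β₃*r₂)*e1p + Q*e3r - (α₃*p₁+β₃*p₂)*e1r)
      - e*((α₃*r₁+β₃*r₂)*e2p + R*e3r - (α₃*p₁+β₃*p₂)*e2r + P*e3p)
      + Q*hbez
  · linear_combination
      a*((α₂*q₁+β₂*q₂)*e1p + Q*e2q - (α₂*p₁+β₂*p₂)*e1q + P*e2p)
      + b*((α₃*q₁+β₃*q₂)*e1p + Q*e3q - (α₃*p₁+β₃*p₂)*e1q + P*e3p)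
      + e*((α₃*q₁+β₃*q₂)*e2p + R*e3q - (α₃*p₁+β₃*p₂)*e2q)
      + R*hbez

lemma forward_dir {K : Type*} [Field K]
    (P Q R p₁ q₁ r₁ p₂ q₂ r₂ : K[X])
    (hcop : ∀ d : K[X], d ∣ P → d ∣ Q → d ∣ R → IsUnit d)
    (h₁ : (![p₁, q₁, r₁] : Fin 3 → K[X]) ∈ syzygyModule P Q R)
    (h₂ : (![p₂, q₂, r₂] : Fin 3 → K[X]) ∈ syzygyModule P Q R)
    (b : Module.Basis (Fin 2) K[X] (syzygyModule P Q R))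
    (hb0 : b 0 = ⟨![p₁, q₁, r₁], h₁⟩) (hb1 : b 1 = ⟨![p₂, q₂, r₂], h₂⟩) :
    ∃ c : K, c ≠ 0 ∧
          q₁ * r₂ - q₂ * r₁ = C c * P ∧
          p₂ * r₁ - p₁ * r₂ = C c * Q ∧
          p₁ * q₂ - p₂ * q₁ = C c * R := by
  obtain ⟨a, bb, e, hbez⟩ := bezout3 hcop
  have hk1 : (![Q, -P, 0] : Fin 3 → K[X]) ∈ syzygyModule P Q R := by
    rw [mem_syz]; simp; ring
  have hk2 : (![R, 0, -P] : Fin 3 → K[X]) ∈ syzygyModule P Q R := by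
    rw [mem_syz]; simp; ring
  have hk3 : (![0, R, -Q] : Fin 3 → K[X]) ∈ syzygyModule P Q R := by
    rw [mem_syz]; simp; ring
  set z1 : syzygyModule P Q R := ⟨![Q, -P, 0], hk1⟩ with hz1
  set z2 : syzygyModule P Q R := ⟨![R, 0, -P], hk2⟩ with hz2
  set z3 : syzygyModule P Q R := ⟨![0, R, -Q], hk3⟩ with hz3
  have hs1 := b.sum_repr z1
  have hs2 := b.sum_repr z2
  have hs3 := b.sum_repr z3
  rw [Fin.sum_univ_two, hb0, hb1] at hs1 hs2 hs3
  have e1p : b.repr z1 0 * p₁ + b.repr z1 1 * p₂ = Q := by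
    have := congrFun (congrArg Subtype.val hs1) 0; simpa [smul_eq_mul, hz1] using this
  have e1q : b.repr z1 0 * q₁ + b.repr z1 1 * q₂ = -P := by
    have := congrFun (congrArg Subtype.val hs1) 1; simpa [smul_eq_mul, hz1] using this
  have e1r : b.repr z1 0 * r₁ + b.repr z1 1 * r₂ = 0 := by
    have := congrFun (congrArg Subtype.val hs1) 2; simpa [smul_eq_mul, hz1] using this
  have e2p : b.repr z2 0 * p₁ + b.repr z2 1 * p₂ = R := by
    have := congrFun (congrArg Subtype.val hs2) 0; simpa [smul_eq_mul, hz2] using this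
  have e2q : b.repr z2 0 * q₁ + b.repr z2 1 * q₂ = 0 := by
    have := congrFun (congrArg Subtype.val hs2) 1; simpa [smul_eq_mul, hz2] using this
  have e2r : b.repr z2 0 * r₁ + b.repr z2 1 * r₂ = -P := by
    have := congrFun (congrArg Subtype.val hs2) 2; simpa [smul_eq_mul, hz2] using this
  have e3p : b.repr z3 0 * p₁ + b.repr z3 1 * p₂ = 0 := by
    have := congrFun (congrArg Subtype.val hs3) 0; simpa [smul_eq_mul, hz3] using this
  have e3q : b.repr z3 0 * q₁ + b.repr z3 1 * q₂ = R := by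
    have := congrFun (congrArg Subtype.val hs3) 1; simpa [smul_eq_mul, hz3] using this
  have e3r : b.repr z3 0 * r₁ + b.repr z3 1 * r₂ = -Q := by
    have := congrFun (congrArg Subtype.val hs3) 2; simpa [smul_eq_mul, hz3] using this
  obtain ⟨hP, hQ, hR⟩ := key_forward P Q R p₁ q₁ r₁ p₂ q₂ r₂ a bb e
    (b.repr z1 0) (b.repr z1 1) (b.repr z2 0) (b.repr z2 1) (b.repr z3 0) (b.repr z3 1)
    hbez e1p e1q e1r e2p e2q e2r e3p e3q e3r
  set h : K[X] := a*(b.repr z1 0*(b.repr z2 1)-(b.repr z2 0)*(b.repr z1 1))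
      + bb*((b.repr z1 0)*(b.repr z3 1)-(b.repr z3 0)*(b.repr z1 1))
      + e*((b.repr z2 0)*(b.repr z3 1)-(b.repr z3 0)*(b.repr z2 1)) with hh
  have hdP : h ∣ P := ⟨q₁*r₂-q₂*r₁, hP.symm⟩
  have hdQ : h ∣ Q := ⟨p₂*r₁-p₁*r₂, hQ.symm⟩
  have hdR : h ∣ R := ⟨p₁*q₂-p₂*q₁, hR.symm⟩
  obtain ⟨c₀, hc₀u, hc₀⟩ := Polynomial.isUnit_iff.mp (hcop h hdP hdQ hdR)
  have hc₀ne : c₀ ≠ 0 := hc₀u.ne_zero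
  refine ⟨c₀⁻¹, inv_ne_zero hc₀ne, ?_, ?_, ?_⟩
  · have hinv : C c₀⁻¹ * C c₀ = (1 : K[X]) := by
      rw [← C_mul, inv_mul_cancel₀ hc₀ne, C_1]
    rw [← hc₀] at hP
    linear_combination C c₀⁻¹ * hP - (q₁*r₂-q₂*r₁) * hinv
  · have hinv : C c₀⁻¹ * C c₀ = (1 : K[X]) := by
      rw [← C_mul, inv_mul_cancel₀ hc₀ne, C_1]
    rw [← hc₀] at hQ
    linear_combination C c₀⁻¹ * hQ - (p₂*r₁-p₁*r₂) * hinv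
  · have hinv : C c₀⁻¹ * C c₀ = (1 : K[X]) := by
      rw [← C_mul, inv_mul_cancel₀ hc₀ne, C_1]
    rw [← hc₀] at hR
    linear_combination C c₀⁻¹ * hR - (p₁*q₂-p₂*q₁) * hinv

set_option maxHeartbeats 1000000 in
lemma backward_dir {K : Type*} [Field K]
    (P Q R p₁ q₁ r₁ p₂ q₂ r₂ : K[X]) (a b e : K[X])
    (hbez : a * P + b * Q + e * R = 1)
    (h₁ : (![p₁, q₁, r₁] : Fin 3 → K[X]) ∈ syzygyModule P Q R)
    (h₂ : (![p₂, q₂, r₂] : Fin 3 → K[X]) ∈ syzygyModule P Q R)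
    (c : K) (hc : c ≠ 0)
    (hC1 : q₁ * r₂ - q₂ * r₁ = C c * P)
    (hC2 : p₂ * r₁ - p₁ * r₂ = C c * Q)
    (hC3 : p₁ * q₂ - p₂ * q₁ = C c * R) :
    ∃ b : Module.Basis (Fin 2) K[X] (syzygyModule P Q R),
        b 0 = ⟨![p₁, q₁, r₁], h₁⟩ ∧ b 1 = ⟨![p₂, q₂, r₂], h₂⟩ := by
  have hinv : C c⁻¹ * C c = (1 : K[X]) := by
    rw [← C_mul, inv_mul_cancel₀ hc, C_1]
  set v₁ : syzygyModule P Q R := ⟨![p₁, q₁, r₁], h₁⟩ with hv₁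
  set v₂ : syzygyModule P Q R := ⟨![p₂, q₂, r₂], h₂⟩ with hv₂
  let ψ : (Fin 2 → K[X]) →ₗ[K[X]] syzygyModule P Q R :=
    { toFun := fun f => f 0 • v₁ + f 1 • v₂
      map_add' := by
        intro f g
        simp only [Pi.add_apply, add_smul]
        abel
      map_smul' := by
        intro m f
        simp only [Pi.smul_apply, smul_eq_mul, RingHom.id_apply, smul_add, mul_smul] }
  let φ : syzygyModule P Q R →ₗ[K[X]] (Fin 2 → K[X]) :=
    { toFun := fun z =>
        ![C c⁻¹ * (a*((z : Fin 3 → K[X]) 1*r₂ - q₂*(z : Fin 3 → K[X]) 2)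
            + b*((z : Fin 3 → K[X]) 2*p₂ - r₂*(z : Fin 3 → K[X]) 0)
            + e*((z : Fin 3 → K[X]) 0*q₂ - p₂*(z : Fin 3 → K[X]) 1)),
          C c⁻¹ * (a*(q₁*(z : Fin 3 → K[X]) 2 - (z : Fin 3 → K[X]) 1*r₁)
            + b*(r₁*(z : Fin 3 → K[X]) 0 - (z : Fin 3 → K[X]) 2*p₁)
            + e*(p₁*(z : Fin 3 → K[X]) 1 - (z : Fin 3 → K[X]) 0*q₁))]
      map_add' := by
        intro z w
        funext i
        fin_cases i <;>
          simp only [Fin.zero_eta, Fin.mk_one, Fin.isValue, Submodule.coe_add, Pi.add_apply, Matrix.cons_val_zero,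
            Matrix.cons_val_one, Matrix.head_cons] <;> ring
      map_smul' := by
        intro m z
        funext i
        fin_cases i <;>
          simp only [Fin.zero_eta, Fin.mk_one, Fin.isValue, Submodule.coe_smul, Pi.smul_apply, smul_eq_mul, RingHom.id_apply,
            Matrix.cons_val_zero, Matrix.cons_val_one, Matrix.head_cons] <;> ring }
  have H1 : P * p₁ + Q * q₁ + R * r₁ = 0 := by simpa [mem_syz] using h₁
  have H2 : P * p₂ + Q * q₂ + R * r₂ = 0 := by simpa [mem_syz] using h₂
  have hφψ : φ.comp ψ = LinearMap.id := by
    apply LinearMap.ext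
    intro f
    funext i
    have c1 : ((ψ f : syzygyModule P Q R) : Fin 3 → K[X]) 0
        = f 0 * p₁ + f 1 * p₂ := by
      show ((f 0 • v₁ + f 1 • v₂ : syzygyModule P Q R) : Fin 3 → K[X]) 0 = _
      simp [hv₁, hv₂]
    have c2 : ((ψ f : syzygyModule P Q R) : Fin 3 → K[X]) 1
        = f 0 * q₁ + f 1 * q₂ := by
      show ((f 0 • v₁ + f 1 • v₂ : syzygyModule P Q R) : Fin 3 → K[X]) 1 = _
      simp [hv₁, hv₂]
    have c3 : ((ψ f : syzygyModule P Q R) : Fin 3 → K[X]) 2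
        = f 0 * r₁ + f 1 * r₂ := by
      show ((f 0 • v₁ + f 1 • v₂ : syzygyModule P Q R) : Fin 3 → K[X]) 2 = _
      simp [hv₁, hv₂]
    fin_cases i
    · show C c⁻¹ * (a*(((ψ f : syzygyModule P Q R) : Fin 3 → K[X]) 1*r₂ - q₂*((ψ f : syzygyModule P Q R) : Fin 3 → K[X]) 2) + b*(((ψ f : syzygyModule P Q R) : Fin 3 → K[X]) 2*p₂ - r₂*((ψ f : syzygyModule P Q R) : Fin 3 → K[X]) 0) + e*(((ψ f : syzygyModule P Q R) : Fin 3 → K[X]) 0*q₂ - p₂*((ψ f : syzygyModule P Q R) : Fin 3 → K[X]) 1)) = f 0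
      rw [c1, c2, c3]
      linear_combination (C c⁻¹*f 0*a)*hC1 + (C c⁻¹*f 0*b)*hC2 + (C c⁻¹*f 0*e)*hC3
        + (C c⁻¹*C c*f 0)*hbez + f 0*hinv
    · show C c⁻¹ * (a*(q₁*((ψ f : syzygyModule P Q R) : Fin 3 → K[X]) 2 - ((ψ f : syzygyModule P Q R) : Fin 3 → K[X]) 1*r₁) + b*(r₁*((ψ f : syzygyModule P Q R) : Fin 3 → K[X]) 0 - ((ψ f : syzygyModule P Q R) : Fin 3 → K[X]) 2*p₁) + e*(p₁*((ψ f : syzygyModule P Q R) : Fin 3 → K[X]) 1 - ((ψ f : syzygyModule P Q R) : Fin 3 → K[X]) 0*q₁)) = f 1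
      rw [c1, c2, c3]
      linear_combination (C c⁻¹*f 1*a)*hC1 + (C c⁻¹*f 1*b)*hC2 + (C c⁻¹*f 1*e)*hC3
        + (C c⁻¹*C c*f 1)*hbez + f 1*hinv
  have hψφ : ψ.comp φ = LinearMap.id := by
    apply LinearMap.ext
    intro z
    have hz : P * (z : Fin 3 → K[X]) 0 + Q * (z : Fin 3 → K[X]) 1
        + R * (z : Fin 3 → K[X]) 2 = 0 := (mem_syz _).mp z.2
    show ψ (φ z) = z
    apply Subtype.ext
    funext i
    have key : ∀ j, ((ψ (φ z) : syzygyModule P Q R) : Fin 3 → K[X]) j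
        = φ z 0 * (![p₁,q₁,r₁] : Fin 3 → K[X]) j + φ z 1 * (![p₂,q₂,r₂] : Fin 3 → K[X]) j := by
      intro j
      show ((φ z 0 • v₁ + φ z 1 • v₂ : syzygyModule P Q R) : Fin 3 → K[X]) j = _
      fin_cases j <;> simp [hv₁, hv₂]
    fin_cases i
    · rw [show (⟨0, by norm_num⟩ : Fin 3) = 0 from rfl, key 0]
      show C c⁻¹ * (a*((z : Fin 3 → K[X]) 1*r₂ - q₂*(z : Fin 3 → K[X]) 2)
            + b*((z : Fin 3 → K[X]) 2*p₂ - r₂*(z : Fin 3 → K[X]) 0)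
            + e*((z : Fin 3 → K[X]) 0*q₂ - p₂*(z : Fin 3 → K[X]) 1)) * ((![p₁,q₁,r₁] : Fin 3 → K[X]) 0)
          + C c⁻¹ * (a*(q₁*(z : Fin 3 → K[X]) 2 - (z : Fin 3 → K[X]) 1*r₁)
            + b*(r₁*(z : Fin 3 → K[X]) 0 - (z : Fin 3 → K[X]) 2*p₁)
            + e*(p₁*(z : Fin 3 → K[X]) 1 - (z : Fin 3 → K[X]) 0*q₁)) * ((![p₂,q₂,r₂] : Fin 3 → K[X]) 0)
          = (z : Fin 3 → K[X]) 0
      simp only [Matrix.cons_val_zero]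
      linear_combination (-(C c⁻¹))*((a*(z : Fin 3 → K[X]) 1 - (z : Fin 3 → K[X]) 0*b)*hC2
        + (a*(z : Fin 3 → K[X]) 2 - (z : Fin 3 → K[X]) 0*e)*hC3
        - C c*(z : Fin 3 → K[X]) 0*hbez + C c*a*hz) + (z : Fin 3 → K[X]) 0*hinv
    · rw [show (⟨1, by norm_num⟩ : Fin 3) = 1 from rfl, key 1]
      show C c⁻¹ * (a*((z : Fin 3 → K[X]) 1*r₂ - q₂*(z : Fin 3 → K[X]) 2)
            + b*((z : Fin 3 → K[X]) 2*p₂ - r₂*(z : Fin 3 → K[X]) 0)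
            + e*((z : Fin 3 → K[X]) 0*q₂ - p₂*(z : Fin 3 → K[X]) 1)) * ((![p₁,q₁,r₁] : Fin 3 → K[X]) 1)
          + C c⁻¹ * (a*(q₁*(z : Fin 3 → K[X]) 2 - (z : Fin 3 → K[X]) 1*r₁)
            + b*(r₁*(z : Fin 3 → K[X]) 0 - (z : Fin 3 → K[X]) 2*p₁)
            + e*(p₁*(z : Fin 3 → K[X]) 1 - (z : Fin 3 → K[X]) 0*q₁)) * ((![p₂,q₂,r₂] : Fin 3 → K[X]) 1)
          = (z : Fin 3 → K[X]) 1
      simp only [Matrix.cons_val_one, Matrix.head_cons, Matrix.cons_val_zero]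
      linear_combination (-(C c⁻¹))*((b*(z : Fin 3 → K[X]) 0 - (z : Fin 3 → K[X]) 1*a)*hC1
        + (b*(z : Fin 3 → K[X]) 2 - (z : Fin 3 → K[X]) 1*e)*hC3
        - C c*(z : Fin 3 → K[X]) 1*hbez + C c*b*hz) + (z : Fin 3 → K[X]) 1*hinv
    · rw [show (⟨2, by norm_num⟩ : Fin 3) = 2 from rfl, key 2]
      show C c⁻¹ * (a*((z : Fin 3 → K[X]) 1*r₂ - q₂*(z : Fin 3 → K[X]) 2)
            + b*((z : Fin 3 → K[X]) 2*p₂ - r₂*(z : Fin 3 → K[X]) 0)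
            + e*((z : Fin 3 → K[X]) 0*q₂ - p₂*(z : Fin 3 → K[X]) 1)) * ((![p₁,q₁,r₁] : Fin 3 → K[X]) 2)
          + C c⁻¹ * (a*(q₁*(z : Fin 3 → K[X]) 2 - (z : Fin 3 → K[X]) 1*r₁)
            + b*(r₁*(z : Fin 3 → K[X]) 0 - (z : Fin 3 → K[X]) 2*p₁)
            + e*(p₁*(z : Fin 3 → K[X]) 1 - (z : Fin 3 → K[X]) 0*q₁)) * ((![p₂,q₂,r₂] : Fin 3 → K[X]) 2)
          = (z : Fin 3 → K[X]) 2
      simp only [Matrix.cons_val_two, Matrix.tail_cons, Matrix.head_cons]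
      linear_combination (-(C c⁻¹))*((e*(z : Fin 3 → K[X]) 0 - (z : Fin 3 → K[X]) 2*a)*hC1
        + (e*(z : Fin 3 → K[X]) 1 - (z : Fin 3 → K[X]) 2*b)*hC2
        - C c*(z : Fin 3 → K[X]) 2*hbez + C c*e*hz) + (z : Fin 3 → K[X]) 2*hinv
  let eqv : syzygyModule P Q R ≃ₗ[K[X]] (Fin 2 → K[X]) :=
    LinearEquiv.ofLinear φ ψ hφψ hψφ
  refine ⟨Module.Basis.ofEquivFun eqv, ?_, ?_⟩
  · have h0 : (Module.Basis.ofEquivFun eqv) 0 = eqv.symm (Pi.single (0 : Fin 2) 1) := by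
      rw [Module.Basis.coe_ofEquivFun]
    rw [h0]
    simp only [eqv, LinearEquiv.ofLinear_symm_apply]
    simp only [ψ, LinearMap.coe_mk, AddHom.coe_mk]
    simp
  · have h1' : (Module.Basis.ofEquivFun eqv) 1 = eqv.symm (Pi.single (1 : Fin 2) 1) := by
      rw [Module.Basis.coe_ofEquivFun]
    rw [h1']
    simp only [eqv, LinearEquiv.ofLinear_symm_apply]
    simp only [ψ, LinearMap.coe_mk, AddHom.coe_mk]
    simp

theorem basis_iff_cross_product_scalar_multiple {K : Type*} [Field K]
    (P Q R p₁ q₁ r₁ p₂ q₂ r₂ : K[X])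
    (hcop : ∀ d : K[X], d ∣ P → d ∣ Q → d ∣ R → IsUnit d)
    (h₁ : (![p₁, q₁, r₁] : Fin 3 → K[X]) ∈ syzygyModule P Q R)
    (h₂ : (![p₂, q₂, r₂] : Fin 3 → K[X]) ∈ syzygyModule P Q R) :
    (∃ b : Module.Basis (Fin 2) K[X] (syzygyModule P Q R),
        b 0 = ⟨![p₁, q₁, r₁], h₁⟩ ∧ b 1 = ⟨![p₂, q₂, r₂], h₂⟩)
      ↔ ∃ c : K, c ≠ 0 ∧
          q₁ * r₂ - q₂ * r₁ = C c * P ∧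
          p₂ * r₁ - p₁ * r₂ = C c * Q ∧
          p₁ * q₂ - p₂ * q₁ = C c * R := by
  constructor
  · rintro ⟨b, hb0, hb1⟩
    exact forward_dir P Q R p₁ q₁ r₁ p₂ q₂ r₂ hcop h₁ h₂ b hb0 hb1
  · rintro ⟨c, hc, hC1, hC2, hC3⟩
    obtain ⟨a, bb, e, hbez⟩ := bezout3 hcop
    exact backward_dir P Q R p₁ q₁ r₁ p₂ q₂ r₂ a bb e hbez h₁ h₂ c hc hC1 hC2 hC3
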